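/- (Abstract turnpike estimate.) Let (M,ρ) be a metric space, T > 0, and Γ a set of functions from [0,T] to M. Let ν, ν̂ : Γ → Γ be maps, W : M × M → [0,∞) a function, v : (0,T] → (0,∞) a function, λ > 0 and ε ∈ [0,1). Assume: (H1) for all μ, μ̂ ∈ Γ, D⃗(ν̂[μ], ν̂[μ̂]) ≤ W(μ(0), μ̂(0)) + ε·D⃗(μ, μ̂); (H2) for all μ, μ̂ ∈ Γ with μ(0) = μ̂(0), D⃖(ν̂[μ], ν̂[μ̂]) ≤ ε·D⃖(μ, μ̂). Let μ ∈ Γ satisfy ν[μ] = μ, let μ̂ ∈ Γ satisfy ν̂[μ̂] = μ̂, and assume there exists μ̃ ∈ Γ with ν̂[μ̃] = μ̃ and μ̃(0) = μ(0). If moreover D⃗(μ̃, μ̂) < ∞ and D⃖(μ̃, μ) < ∞, then for every t ∈ (0,T): ρ(μ(t), μ̂(t)) ≤ (v(t)/(1−ε))·W(μ(0), μ̂(0)) + (e^{−λ(T−t)}/(1−ε))·D⃖(ν̂[μ], ν[μ]). -/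

import Mathlib

open Set Filter
open scoped ENNReal

private lemma stmt5_key {a b : ℝ≥0∞} {ε : ℝ} (hε0 : 0 ≤ ε) (hε1 : ε < 1) (ha : a ≠ ⊤)
    (h : a ≤ b + ENNReal.ofReal ε * a) : a ≤ ENNReal.ofReal ((1 - ε)⁻¹) * b := by
  have h1 : ENNReal.ofReal (1 - ε) * a + ENNReal.ofReal ε * a = a := by
    rw [← add_mul, ← ENNReal.ofReal_add (by linarith) hε0]
    norm_num
  have h2 : ENNReal.ofReal (1 - ε) * a ≤ b :=
    (ENNReal.add_le_add_iff_right
      (ENNReal.mul_ne_top ENNReal.ofReal_ne_top ha)).mp (by rw [h1]; exact h)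
  calc a = ENNReal.ofReal ((1 - ε)⁻¹) * (ENNReal.ofReal (1 - ε) * a) := by
        rw [← mul_assoc, ← ENNReal.ofReal_mul (inv_nonneg.mpr (by linarith : (0:ℝ) ≤ 1 - ε)),
          inv_mul_cancel₀ (by linarith), ENNReal.ofReal_one, one_mul]
    _ ≤ _ := mul_le_mul_right h2 _

/-- Abstract turnpike estimate.  `Df` is the forward weighted distance
`D⃗(μ,μ̂) = sup_{0<s≤T} v(s)⁻¹ ρ(μ(s),μ̂(s))` and `Db` the backward weighted distance
`D⃖(μ,μ̂) = sup_{0≤s<T} e^{λ(T−s)} ρ(μ(s),μ̂(s))` (both with values in `[0,∞]`). -/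
theorem stmt5 {M : Type*} [MetricSpace M]
    (T : ℝ) (hT : 0 < T)
    (Γ : Set (ℝ → M))
    (ν νh : (ℝ → M) → (ℝ → M))
    (hν : ∀ μ ∈ Γ, ν μ ∈ Γ) (hνh : ∀ μ ∈ Γ, νh μ ∈ Γ)
    (W : M → M → ℝ) (hW : ∀ a b, 0 ≤ W a b)
    (v : ℝ → ℝ) (hv : ∀ s ∈ Set.Ioc (0:ℝ) T, 0 < v s)
    (lam ε : ℝ) (hlam : 0 < lam) (hε0 : 0 ≤ ε) (hε1 : ε < 1)
    (Df Db : (ℝ → M) → (ℝ → M) → ℝ≥0∞)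
    (hDf : ∀ μ μh : ℝ → M, Df μ μh =
      ⨆ s ∈ Set.Ioc (0:ℝ) T, ENNReal.ofReal ((v s)⁻¹ * dist (μ s) (μh s)))
    (hDb : ∀ μ μh : ℝ → M, Db μ μh =
      ⨆ s ∈ Set.Ico (0:ℝ) T, ENNReal.ofReal (Real.exp (lam * (T - s)) * dist (μ s) (μh s)))
    (H1 : ∀ μ ∈ Γ, ∀ μh ∈ Γ,
      Df (νh μ) (νh μh) ≤ ENNReal.ofReal (W (μ 0) (μh 0)) + ENNReal.ofReal ε * Df μ μh)
    (H2 : ∀ μ ∈ Γ, ∀ μh ∈ Γ, μ 0 = μh 0 →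
      Db (νh μ) (νh μh) ≤ ENNReal.ofReal ε * Db μ μh)
    (μ μh : ℝ → M) (hμ : μ ∈ Γ) (hμh : μh ∈ Γ)
    (hfix : ν μ = μ) (hfixh : νh μh = μh)
    (μt : ℝ → M) (hμt : μt ∈ Γ) (hfixt : νh μt = μt) (hμt0 : μt 0 = μ 0)
    (hfin1 : Df μt μh < ⊤) (hfin2 : Db μt μ < ⊤) :
    ∀ t ∈ Set.Ioo (0:ℝ) T,
      ENNReal.ofReal (dist (μ t) (μh t)) ≤
        ENNReal.ofReal (v t / (1 - ε) * W (μ 0) (μh 0)) +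
        ENNReal.ofReal (Real.exp (-lam * (T - t)) / (1 - ε)) * Db (νh μ) (ν μ) := by
  intro t ht
  have h1ε : (0:ℝ) < 1 - ε := by linarith
  -- bound on Df μt μh
  have hAle : Df μt μh ≤ ENNReal.ofReal ((1 - ε)⁻¹) * ENNReal.ofReal (W (μ 0) (μh 0)) := by
    apply stmt5_key hε0 hε1 hfin1.ne
    have h := H1 μt hμt μh hμh
    rwa [hfixt, hfixh, hμt0] at h
  -- triangle inequality for Db
  have tri : Db μt μ ≤ Db μt (νh μ) + Db (νh μ) μ := by
    simp only [hDb]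
    refine iSup₂_le fun s hs => ?_
    calc ENNReal.ofReal (Real.exp (lam * (T - s)) * dist (μt s) (μ s))
        ≤ ENNReal.ofReal (Real.exp (lam * (T - s)) * dist (μt s) ((νh μ) s)) +
          ENNReal.ofReal (Real.exp (lam * (T - s)) * dist ((νh μ) s) (μ s)) := by
          rw [← ENNReal.ofReal_add (mul_nonneg (Real.exp_pos _).le dist_nonneg)
            (mul_nonneg (Real.exp_pos _).le dist_nonneg), ← mul_add]
          exact ENNReal.ofReal_le_ofReal
            (mul_le_mul_of_nonneg_left (dist_triangle _ _ _) (Real.exp_pos _).le)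
      _ ≤ _ := add_le_add (le_iSup₂_of_le s hs le_rfl) (le_iSup₂_of_le s hs le_rfl)
  -- bound on Db μt μ
  have hBle : Db μt μ ≤ ENNReal.ofReal ((1 - ε)⁻¹) * Db (νh μ) (ν μ) := by
    apply stmt5_key hε0 hε1 hfin2.ne
    have h2 := H2 μt hμt μ hμ hμt0
    rw [hfixt] at h2
    calc Db μt μ ≤ Db μt (νh μ) + Db (νh μ) μ := tri
      _ = Db (νh μ) μ + Db μt (νh μ) := add_comm _ _
      _ ≤ Db (νh μ) (ν μ) + ENNReal.ofReal ε * Db μt μ := by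
          rw [hfix]; exact add_le_add_right h2 _
  have hvpos := hv t ⟨ht.1, ht.2.le⟩
  -- forward piece
  have hf : ENNReal.ofReal (dist (μt t) (μh t)) ≤
      ENNReal.ofReal (v t / (1 - ε) * W (μ 0) (μh 0)) := by
    have h1 : ENNReal.ofReal ((v t)⁻¹ * dist (μt t) (μh t)) ≤ Df μt μh := by
      rw [hDf]; exact le_iSup₂_of_le t ⟨ht.1, ht.2.le⟩ le_rfl
    have h2 := h1.trans hAle
    calc ENNReal.ofReal (dist (μt t) (μh t))
        = ENNReal.ofReal (v t) * ENNReal.ofReal ((v t)⁻¹ * dist (μt t) (μh t)) := by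
          rw [← ENNReal.ofReal_mul hvpos.le, ← mul_assoc, mul_inv_cancel₀ hvpos.ne', one_mul]
      _ ≤ ENNReal.ofReal (v t) *
            (ENNReal.ofReal ((1 - ε)⁻¹) * ENNReal.ofReal (W (μ 0) (μh 0))) :=
          mul_le_mul_right h2 _
      _ = ENNReal.ofReal (v t / (1 - ε) * W (μ 0) (μh 0)) := by
          rw [← ENNReal.ofReal_mul (inv_nonneg.mpr h1ε.le),
            ← ENNReal.ofReal_mul hvpos.le]
          congr 1; ring
  -- backward piece
  have hb : ENNReal.ofReal (dist (μ t) (μt t)) ≤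
      ENNReal.ofReal (Real.exp (-lam * (T - t)) / (1 - ε)) * Db (νh μ) (ν μ) := by
    have h1 : ENNReal.ofReal (Real.exp (lam * (T - t)) * dist (μt t) (μ t)) ≤ Db μt μ := by
      rw [hDb]; exact le_iSup₂_of_le t ⟨ht.1.le, ht.2⟩ le_rfl
    have h2 := h1.trans hBle
    calc ENNReal.ofReal (dist (μ t) (μt t))
        = ENNReal.ofReal (Real.exp (-lam * (T - t))) *
            ENNReal.ofReal (Real.exp (lam * (T - t)) * dist (μt t) (μ t)) := by
          rw [← ENNReal.ofReal_mul (Real.exp_pos _).le, ← mul_assoc, ← Real.exp_add]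
          have he : -lam * (T - t) + lam * (T - t) = 0 := by ring
          rw [he, Real.exp_zero, one_mul, dist_comm]
      _ ≤ ENNReal.ofReal (Real.exp (-lam * (T - t))) *
            (ENNReal.ofReal ((1 - ε)⁻¹) * Db (νh μ) (ν μ)) := mul_le_mul_right h2 _
      _ = ENNReal.ofReal (Real.exp (-lam * (T - t)) / (1 - ε)) * Db (νh μ) (ν μ) := by
          rw [← mul_assoc, ← ENNReal.ofReal_mul (Real.exp_pos _).le, div_eq_mul_inv]
  calc ENNReal.ofReal (dist (μ t) (μh t))
      ≤ ENNReal.ofReal (dist (μ t) (μt t) + dist (μt t) (μh t)) :=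
        ENNReal.ofReal_le_ofReal (dist_triangle _ _ _)
    _ = ENNReal.ofReal (dist (μ t) (μt t)) + ENNReal.ofReal (dist (μt t) (μh t)) :=
        ENNReal.ofReal_add dist_nonneg dist_nonneg
    _ ≤ _ := le_trans (add_le_add hb hf) (le_of_eq (add_comm _ _))
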